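/- Let M > 0 and let κ_M be the measure on [0, M] with density u ↦ 1/√u with respect to Lebesgue measure. Then the logarithmic potential U^{κ_M}(x) = ∫₀^M −log|x−u| (1/√u) du is a concave function of x on the open interval (0, M); equivalently, its second derivative satisfies (U^{κ_M})''(x) < 0 for all x ∈ (0, M), and moreover x^{3/2}(U^{κ_M})''(x) tends to 0 as x → 0⁺ and d/dx (x^{3/2}(U^{κ_M})''(x)) = −√(Mx)/(M−x)² on (0, M). -/

import Mathlib

open MeasureTheory Real Filter Set
open intervalIntegral

noncomputable section

/-- The logarithmic potential of the measure `𝟙_{[0,M]}(u) u^{-1/2} du`. -/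
def UkM (M : ℝ) : ℝ → ℝ := fun x => ∫ u in (0:ℝ)..M, -Real.log |x - u| / Real.sqrt u

lemma intlog_zero (c : ℝ) (hc : 0 ≤ c) : IntervalIntegrable Real.log volume 0 c := by
  have hint : IntervalIntegrable (fun u : ℝ => 2 * u ^ (-(1:ℝ)/2) + |Real.log c|) volume 0 c := by
    apply IntervalIntegrable.add
    · exact (intervalIntegrable_rpow' (by norm_num)).const_mul 2
    · exact intervalIntegrable_const
  refine hint.mono_fun' Real.measurable_log.aestronglyMeasurable ?_
  rw [uIoc_of_le hc]
  filter_upwards [ae_restrict_mem measurableSet_Ioc] with u hu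
  obtain ⟨hu0, huc⟩ := hu
  have hrpos : (0:ℝ) < u ^ (-(1:ℝ)/2) := Real.rpow_pos_of_pos hu0 _
  rcases le_or_gt u 1 with h1 | h1
  · have hlog : Real.log u ≤ 0 := Real.log_nonpos hu0.le h1
    have key : -Real.log u ≤ 2 * u ^ (-(1:ℝ)/2) := by
      have := Real.log_le_sub_one_of_pos (Real.rpow_pos_of_pos hu0 (-(1:ℝ)/2))
      rw [Real.log_rpow hu0] at this
      nlinarith
    have : ‖Real.log u‖ = -Real.log u := by
      rw [Real.norm_eq_abs, abs_of_nonpos hlog]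
    rw [this]
    have : (0:ℝ) ≤ |Real.log c| := abs_nonneg _
    linarith
  · have hlog : 0 ≤ Real.log u := Real.log_nonneg h1.le
    have : ‖Real.log u‖ = Real.log u := by rw [Real.norm_eq_abs, abs_of_nonneg hlog]
    rw [this]
    have hlc : Real.log u ≤ Real.log c := Real.log_le_log hu0 huc
    have : Real.log c ≤ |Real.log c| := le_abs_self _
    nlinarith

lemma intlog_zero' (c : ℝ) : IntervalIntegrable Real.log volume 0 c := by
  rcases le_or_gt 0 c with h | h
  · exact intlog_zero c h
  · have h1 : IntervalIntegrable Real.log volume 0 (-c) := intlog_zero _ (by linarith)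
    have h2 := (IntervalIntegrable.iff_comp_neg (by simp)).mp h1
    simp only [Real.log_neg_eq_log, neg_zero, neg_neg] at h2
    exact h2

lemma intlog_any (a b : ℝ) : IntervalIntegrable Real.log volume a b :=
  (intlog_zero' a).symm.trans (intlog_zero' b)

lemma intlog_comp (x c d : ℝ) : IntervalIntegrable (fun u => Real.log (x - u)) volume c d := by
  have := (intlog_any (x - c) (x - d)).comp_sub_left x
  simpa using this

lemma sqrtinv_int (c : ℝ) (hc : 0 ≤ c) :
    IntervalIntegrable (fun u : ℝ => (Real.sqrt u)⁻¹) volume 0 c := by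
  have hint : IntervalIntegrable (fun u : ℝ => u ^ (-(1:ℝ)/2)) volume 0 c :=
    intervalIntegrable_rpow' (by norm_num)
  refine hint.mono_fun' ?_ ?_
  · exact (Real.continuous_sqrt.measurable.inv).aestronglyMeasurable
  · rw [uIoc_of_le hc]
    filter_upwards [ae_restrict_mem measurableSet_Ioc] with u hu
    have hu0 : 0 < u := hu.1
    have : (Real.sqrt u)⁻¹ = u ^ (-(1:ℝ)/2) := by
      rw [Real.sqrt_eq_rpow, ← Real.rpow_neg hu0.le]
      norm_num
    rw [Real.norm_eq_abs, this, abs_of_nonneg (Real.rpow_pos_of_pos hu0 _).le]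

/-- kernel as product -/
def kker (x : ℝ) : ℝ → ℝ := fun u => -Real.log (x - u) * (Real.sqrt u)⁻¹

lemma kker_def (x u : ℝ) : kker x u = -Real.log (x - u) * (Real.sqrt u)⁻¹ := rfl

lemma kker_intA (x : ℝ) (hx : 0 < x) :
    IntervalIntegrable (kker x) volume 0 (x/2) := by
  have h1 : IntervalIntegrable (fun u : ℝ => (Real.sqrt u)⁻¹) volume 0 (x/2) :=
    sqrtinv_int _ (by linarith)
  refine h1.continuousOn_mul ?_
  rw [uIcc_of_le (by linarith)]
  have : ∀ u ∈ Icc (0:ℝ) (x/2), x - u ≠ 0 := by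
    intro u hu; obtain ⟨h0, hh⟩ := hu; intro h; nlinarith [hh, h0]
  exact (continuousOn_const.sub continuousOn_id).log (fun u hu => this u hu) |>.neg

lemma kker_intB (x c d : ℝ) (hc : 0 < c) (hd : 0 < d) :
    IntervalIntegrable (kker x) volume c d := by
  have h1 : IntervalIntegrable (fun u : ℝ => -Real.log (x - u)) volume c d :=
    (intlog_comp x c d).neg
  refine h1.mul_continuousOn ?_
  have hsub : uIcc c d ⊆ Ioi (0:ℝ) := by
    rw [uIcc_eq_union]
    rintro u (hu | hu) <;> [exact lt_of_lt_of_le hc hu.1; exact lt_of_lt_of_le hd hu.1]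
  intro u hu
  have hu0 : 0 < u := hsub hu
  exact ((Real.continuous_sqrt.continuousAt).continuousWithinAt).inv₀
    (by positivity)

lemma kker_int (x b : ℝ) (hx : 0 < x) (hb : 0 ≤ b) :
    IntervalIntegrable (kker x) volume 0 b := by
  rcases eq_or_lt_of_le hb with rfl | hb
  · simp [IntervalIntegrable]
  · exact (kker_intA x hx).trans (kker_intB x (x/2) b (by linarith) hb)

/-- antiderivative of kker x -/
def antider (x : ℝ) : ℝ → ℝ := fun u =>
  -2 * ((Real.sqrt u - Real.sqrt x) * Real.log (Real.sqrt u - Real.sqrt x)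
     + (Real.sqrt x + Real.sqrt u) * Real.log (Real.sqrt x + Real.sqrt u) - 2 * Real.sqrt u)

lemma antider_cont (x : ℝ) : Continuous (antider x) := by
  have h1 : Continuous fun u : ℝ =>
      (Real.sqrt u - Real.sqrt x) * Real.log (Real.sqrt u - Real.sqrt x) :=
    Real.continuous_mul_log.comp (Real.continuous_sqrt.sub continuous_const)
  have h2 : Continuous fun u : ℝ =>
      (Real.sqrt x + Real.sqrt u) * Real.log (Real.sqrt x + Real.sqrt u) :=
    Real.continuous_mul_log.comp (continuous_const.add Real.continuous_sqrt)
  have h3 : Continuous fun u : ℝ => (2:ℝ) * Real.sqrt u :=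
    continuous_const.mul Real.continuous_sqrt
  exact continuous_const.mul ((h1.add h2).sub h3)

lemma antider_deriv (x u : ℝ) (hx : 0 < x) (hu : 0 < u) (hne : u ≠ x) :
    HasDerivAt (antider x) (kker x u) u := by
  set s := Real.sqrt x with hs
  set t := Real.sqrt u with ht
  have htpos : 0 < t := Real.sqrt_pos.mpr hu
  have hspos : 0 < s := Real.sqrt_pos.mpr hx
  have hts : t ≠ s := by
    intro h
    apply hne
    have := congrArg (fun y => y ^ 2) h
    simpa [ht, hs, Real.sq_sqrt hu.le, Real.sq_sqrt hx.le] using this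
  have hts' : t - s ≠ 0 := sub_ne_zero.mpr hts
  have hst' : s + t ≠ 0 := by positivity
  have hsq : HasDerivAt Real.sqrt (1 / (2 * t)) u := Real.hasDerivAt_sqrt hu.ne'
  have h1 : HasDerivAt (fun u : ℝ => (Real.sqrt u - s) * Real.log (Real.sqrt u - s))
      ((Real.log (t - s) + 1) * (1 / (2 * t))) u := by
    have := (Real.hasDerivAt_mul_log hts').comp u (hsq.sub_const s)
    simpa [Function.comp_def] using this
  have h2 : HasDerivAt (fun u : ℝ => (s + Real.sqrt u) * Real.log (s + Real.sqrt u))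
      ((Real.log (s + t) + 1) * (1 / (2 * t))) u := by
    have := (Real.hasDerivAt_mul_log hst').comp u (hsq.const_add s)
    simpa [Function.comp_def] using this
  have h3 : HasDerivAt (fun u : ℝ => 2 * Real.sqrt u) (2 * (1 / (2 * t))) u :=
    hsq.const_mul 2
  have h4 := (((h1.add h2).sub h3)).const_mul (-2 : ℝ)
  refine HasDerivAt.congr_deriv h4 (Eq.symm ?_)
  have hprod : (t - s) * (s + t) = u - x := by
    have h5 : t * t = u := Real.mul_self_sqrt hu.le
    have h6 : s * s = x := Real.mul_self_sqrt hx.le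
    nlinarith
  have hlog : Real.log (t - s) + Real.log (s + t) = Real.log (u - x) := by
    rw [← Real.log_mul hts' hst', hprod]
  have hlog2 : Real.log (x - u) = Real.log (u - x) := by
    rw [← Real.log_neg_eq_log, neg_sub]
  show kker x u = _
  rw [kker_def, hlog2, ← hlog]
  field_simp
  ring

lemma antider_zero (x : ℝ) : antider x 0 = 0 := by
  have : Real.log (0 - Real.sqrt x) = Real.log (Real.sqrt x) := by
    rw [zero_sub, Real.log_neg_eq_log]
  simp [antider, Real.sqrt_zero, this]

lemma UkM_eq (M : ℝ) (hM : 0 < M) (x : ℝ) (hx : x ∈ Set.Ioo 0 M) :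
    (∫ u in (0:ℝ)..M, -Real.log |x - u| / Real.sqrt u) = antider x M := by
  obtain ⟨hx0, hxM⟩ := hx
  have hker : (fun u => -Real.log |x - u| / Real.sqrt u) = kker x := by
    funext u
    rw [kker_def, div_eq_mul_inv, Real.log_abs]
  rw [hker]
  have i1 : IntervalIntegrable (kker x) volume 0 x := kker_int x x hx0 hx0.le
  have i2 : IntervalIntegrable (kker x) volume x M := kker_intB x x M hx0 hM
  have e1 : (∫ u in (0:ℝ)..x, kker x u) = antider x x - antider x 0 := by
    apply integral_eq_sub_of_hasDeriv_right_of_le hx0.le (antider_cont x).continuousOn _ i1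
    intro u hu
    exact (antider_deriv x u hx0 hu.1 hu.2.ne).hasDerivWithinAt
  have e2 : (∫ u in x..M, kker x u) = antider x M - antider x x := by
    apply integral_eq_sub_of_hasDeriv_right_of_le hxM.le (antider_cont x).continuousOn _ i2
    intro u hu
    exact (antider_deriv x u hx0 (hx0.trans hu.1) hu.1.ne').hasDerivWithinAt
  rw [← intervalIntegral.integral_add_adjacent_intervals i1 i2, e1, e2, antider_zero]
  ring

/-- the auxiliary function in the sqrt variable -/
def gg (M : ℝ) : ℝ → ℝ := fun s =>
  (Real.log (s + Real.sqrt M) - Real.log (Real.sqrt M - s)) / 2 - Real.sqrt M * s / (M - s ^ 2)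

/-- first derivative of the potential -/
def FF1 (M x : ℝ) : ℝ :=
  (Real.log (Real.sqrt M - Real.sqrt x) - Real.log (Real.sqrt x + Real.sqrt M)) / Real.sqrt x

/-- second derivative of the potential -/
def FF2 (M x : ℝ) : ℝ := gg M (Real.sqrt x) / Real.sqrt x ^ 3

lemma gg_zero (M : ℝ) : gg M 0 = 0 := by simp [gg]

lemma hasDerivAt_gg (M z : ℝ) (hM : 0 < M) (hz0 : 0 ≤ z) (hz : z < Real.sqrt M) :
    HasDerivAt (gg M) (-2 * Real.sqrt M * z ^ 2 / (M - z ^ 2) ^ 2) z := by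
  obtain ⟨a, ha⟩ : ∃ a, Real.sqrt M = a := ⟨_, rfl⟩
  have hM2 : M = a ^ 2 := by rw [← ha, Real.sq_sqrt hM.le]
  subst hM2
  have ha0 : 0 < a := lt_of_le_of_lt hz0 (ha ▸ hz)
  have hza : z < a := ha ▸ hz
  have h1ne : z + a ≠ 0 := by positivity
  have h2ne : a - z ≠ 0 := sub_ne_zero.mpr hza.ne'
  have h3ne : a ^ 2 - z ^ 2 ≠ 0 := by nlinarith
  have hgg : gg (a ^ 2) = fun s =>
      (Real.log (s + a) - Real.log (a - s)) / 2 - a * s / (a ^ 2 - s ^ 2) := by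
    funext s; simp [gg, ha]
  rw [hgg, ha]
  have h1 : HasDerivAt (fun z : ℝ => Real.log (z + a)) ((z + a)⁻¹ * 1) z :=
    by simpa [Function.comp_def] using (Real.hasDerivAt_log h1ne).comp z ((hasDerivAt_id' z).add_const a)
  have h2 : HasDerivAt (fun z : ℝ => Real.log (a - z)) ((a - z)⁻¹ * (-1)) z :=
    (Real.hasDerivAt_log h2ne).comp z ((hasDerivAt_id' z).const_sub a)
  have hnum : HasDerivAt (fun z : ℝ => a * z) (a * 1) z := (hasDerivAt_id z).const_mul a
  have hden : HasDerivAt (fun z : ℝ => a ^ 2 - z ^ 2) (0 - 2 * z ^ 1) z :=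
    (hasDerivAt_const z (a ^ 2)).sub (hasDerivAt_pow 2 z)
  have hq := hnum.div hden h3ne
  have h := ((h1.sub h2).div_const 2).sub hq
  refine HasDerivAt.congr_deriv h (Eq.symm ?_)
  field_simp
  ring

lemma gg_neg (M s : ℝ) (hM : 0 < M) (hs0 : 0 < s) (hs : s < Real.sqrt M) :
    gg M s < 0 := by
  have ha0 : 0 < Real.sqrt M := Real.sqrt_pos.mpr hM
  have hanti : StrictAntiOn (gg M) (Set.Ico 0 (Real.sqrt M)) := by
    apply strictAntiOn_of_deriv_neg (convex_Ico _ _)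
    · intro z hz
      exact (hasDerivAt_gg M z hM hz.1 hz.2).continuousAt.continuousWithinAt
    · intro z hz
      rw [interior_Ico] at hz
      rw [(hasDerivAt_gg M z hM hz.1.le hz.2).deriv]
      apply div_neg_of_neg_of_pos
      · have h2 : (0:ℝ) < z ^ 2 := pow_pos hz.1 2
        nlinarith
      · have : M - z ^ 2 ≠ 0 := by
          have := Real.sq_sqrt hM.le
          nlinarith [hz.1, hz.2, Real.sqrt_nonneg M]
        exact lt_of_le_of_ne (sq_nonneg _) (Ne.symm (pow_ne_zero 2 this))
  have := hanti (Set.left_mem_Ico.mpr ha0) ⟨hs0.le, hs⟩ hs0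
  rwa [gg_zero] at this

lemma hasDerivAt_antider (M x : ℝ) (hM : 0 < M) (hx0 : 0 < x) (hxM : x < M) :
    HasDerivAt (fun y => antider y M) (FF1 M x) x := by
  have hs0 : 0 < Real.sqrt x := Real.sqrt_pos.mpr hx0
  have ha0 : 0 < Real.sqrt M := Real.sqrt_pos.mpr hM
  have hsa : Real.sqrt x < Real.sqrt M := Real.sqrt_lt_sqrt hx0.le hxM
  have h1ne : Real.sqrt M - Real.sqrt x ≠ 0 := sub_ne_zero.mpr hsa.ne'
  have h2ne : Real.sqrt x + Real.sqrt M ≠ 0 := by positivity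
  have hsq : HasDerivAt Real.sqrt (1 / (2 * Real.sqrt x)) x := Real.hasDerivAt_sqrt hx0.ne'
  have h1 : HasDerivAt (fun y : ℝ => (Real.sqrt M - Real.sqrt y) * Real.log (Real.sqrt M - Real.sqrt y))
      ((Real.log (Real.sqrt M - Real.sqrt x) + 1) * -(1 / (2 * Real.sqrt x))) x := by
    have := (Real.hasDerivAt_mul_log h1ne).comp x (hsq.const_sub (Real.sqrt M))
    simpa [Function.comp_def] using this
  have h2 : HasDerivAt (fun y : ℝ => (Real.sqrt y + Real.sqrt M) * Real.log (Real.sqrt y + Real.sqrt M))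
      ((Real.log (Real.sqrt x + Real.sqrt M) + 1) * (1 / (2 * Real.sqrt x))) x := by
    have := (Real.hasDerivAt_mul_log h2ne).comp x (hsq.add_const (Real.sqrt M))
    simpa [Function.comp_def] using this
  have h3 : HasDerivAt (fun _ : ℝ => 2 * Real.sqrt M) 0 x := hasDerivAt_const x _
  have h4 := (((h1.add h2).sub h3)).const_mul (-2 : ℝ)
  have hfun : (fun y => antider y M) = fun y =>
      -2 * ((Real.sqrt M - Real.sqrt y) * Real.log (Real.sqrt M - Real.sqrt y)
        + (Real.sqrt y + Real.sqrt M) * Real.log (Real.sqrt y + Real.sqrt M)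
        - 2 * Real.sqrt M) := rfl
  rw [hfun]
  refine HasDerivAt.congr_deriv h4 (Eq.symm ?_)
  rw [FF1]
  field_simp
  ring

lemma hasDerivAt_FF1 (M x : ℝ) (hM : 0 < M) (hx0 : 0 < x) (hxM : x < M) :
    HasDerivAt (FF1 M) (FF2 M x) x := by
  have hs0 : 0 < Real.sqrt x := Real.sqrt_pos.mpr hx0
  have ha0 : 0 < Real.sqrt M := Real.sqrt_pos.mpr hM
  have hsa : Real.sqrt x < Real.sqrt M := Real.sqrt_lt_sqrt hx0.le hxM
  have h1ne : Real.sqrt M - Real.sqrt x ≠ 0 := sub_ne_zero.mpr hsa.ne'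
  have h2ne : Real.sqrt x + Real.sqrt M ≠ 0 := by positivity
  have hsq : HasDerivAt Real.sqrt (1 / (2 * Real.sqrt x)) x := Real.hasDerivAt_sqrt hx0.ne'
  have h1 : HasDerivAt (fun y : ℝ => Real.log (Real.sqrt M - Real.sqrt y))
      ((Real.sqrt M - Real.sqrt x)⁻¹ * -(1 / (2 * Real.sqrt x))) x := by
    have := (Real.hasDerivAt_log h1ne).comp x (hsq.const_sub (Real.sqrt M))
    simpa [Function.comp_def] using this
  have h2 : HasDerivAt (fun y : ℝ => Real.log (Real.sqrt y + Real.sqrt M))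
      ((Real.sqrt x + Real.sqrt M)⁻¹ * (1 / (2 * Real.sqrt x))) x := by
    have := (Real.hasDerivAt_log h2ne).comp x (hsq.add_const (Real.sqrt M))
    simpa [Function.comp_def] using this
  have h := (h1.sub h2).div hsq hs0.ne'
  have hfun : FF1 M = fun y =>
      (Real.log (Real.sqrt M - Real.sqrt y) - Real.log (Real.sqrt y + Real.sqrt M)) / Real.sqrt y := rfl
  rw [hfun]
  refine HasDerivAt.congr_deriv h (Eq.symm ?_)
  simp only [Pi.sub_apply]
  -- now an algebraic identity
  rw [FF2, gg]
  obtain ⟨s, hs⟩ : ∃ s, Real.sqrt x = s := ⟨_, rfl⟩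
  obtain ⟨a, ha⟩ : ∃ a, Real.sqrt M = a := ⟨_, rfl⟩
  have hx2 : x = s ^ 2 := by rw [← hs, Real.sq_sqrt hx0.le]
  have hM2 : M = a ^ 2 := by rw [← ha, Real.sq_sqrt hM.le]
  have hs0' : 0 < s := hs ▸ hs0
  have ha0' : 0 < a := ha ▸ ha0
  have hsa' : s < a := by rw [← hs, ← ha]; exact hsa
  have h1ne' : a - s ≠ 0 := sub_ne_zero.mpr hsa'.ne'
  have h2ne' : s + a ≠ 0 := by positivity
  have h3ne : a ^ 2 - s ^ 2 ≠ 0 := by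
    have : 0 < a ^ 2 - s ^ 2 := by nlinarith
    exact this.ne'
  rw [hs, ha, hM2]
  field_simp
  ring

lemma rpow32 (y : ℝ) (hy : 0 ≤ y) : y ^ ((3:ℝ)/2) = Real.sqrt y ^ 3 := by
  rw [Real.sqrt_eq_rpow, ← Real.rpow_natCast (y ^ ((1:ℝ)/2)) 3, ← Real.rpow_mul hy]
  norm_num

lemma hasDerivAt_ggsqrt (M x : ℝ) (hM : 0 < M) (hx0 : 0 < x) (hxM : x < M) :
    HasDerivAt (fun y => gg M (Real.sqrt y)) (-Real.sqrt (M * x) / (M - x) ^ 2) x := by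
  have hs0 : 0 < Real.sqrt x := Real.sqrt_pos.mpr hx0
  have hsa : Real.sqrt x < Real.sqrt M := Real.sqrt_lt_sqrt hx0.le hxM
  have hsq : HasDerivAt Real.sqrt (1 / (2 * Real.sqrt x)) x := Real.hasDerivAt_sqrt hx0.ne'
  have h := (hasDerivAt_gg M (Real.sqrt x) hM hs0.le hsa).comp x hsq
  refine HasDerivAt.congr_deriv h (Eq.symm ?_)
  rw [Real.sq_sqrt hx0.le, Real.sqrt_mul hM.le]
  have hMx : M - x ≠ 0 := sub_ne_zero.mpr hxM.ne'
  have hss : Real.sqrt x * Real.sqrt x = x := Real.mul_self_sqrt hx0.le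
  field_simp
  linear_combination (-1 : ℝ) * hss


theorem potential_of_kappa_concave (M : ℝ) (hM : 0 < M) :
    ConcaveOn ℝ (Set.Ioo 0 M) (UkM M) ∧
    (∀ x ∈ Set.Ioo (0:ℝ) M, deriv (deriv (UkM M)) x < 0) ∧
    Tendsto (fun x : ℝ => x ^ ((3:ℝ)/2) * deriv (deriv (UkM M)) x)
      (nhdsWithin 0 (Set.Ioi 0)) (nhds 0) ∧
    ∀ x ∈ Set.Ioo (0:ℝ) M,
      HasDerivAt (fun x : ℝ => x ^ ((3:ℝ)/2) * deriv (deriv (UkM M)) x)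
        (-Real.sqrt (M * x) / (M - x) ^ 2) x := by
  have hUeq : ∀ y ∈ Set.Ioo (0:ℝ) M, UkM M y = antider y M := fun y hy => UkM_eq M hM y hy
  have hd1 : ∀ x ∈ Set.Ioo (0:ℝ) M, HasDerivAt (UkM M) (FF1 M x) x := by
    intro x hx
    refine (hasDerivAt_antider M x hM hx.1 hx.2).congr_of_eventuallyEq ?_
    filter_upwards [Ioo_mem_nhds hx.1 hx.2] with y hy
    exact hUeq y hy
  have hderiv1 : ∀ x ∈ Set.Ioo (0:ℝ) M, deriv (UkM M) x = FF1 M x := fun x hx => (hd1 x hx).deriv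
  have hd2 : ∀ x ∈ Set.Ioo (0:ℝ) M, HasDerivAt (deriv (UkM M)) (FF2 M x) x := by
    intro x hx
    refine (hasDerivAt_FF1 M x hM hx.1 hx.2).congr_of_eventuallyEq ?_
    filter_upwards [Ioo_mem_nhds hx.1 hx.2] with y hy
    exact hderiv1 y hy
  have hderiv2 : ∀ x ∈ Set.Ioo (0:ℝ) M, deriv (deriv (UkM M)) x = FF2 M x :=
    fun x hx => (hd2 x hx).deriv
  have hFF2neg : ∀ x ∈ Set.Ioo (0:ℝ) M, FF2 M x < 0 := by
    intro x hx
    have hs0 : 0 < Real.sqrt x := Real.sqrt_pos.mpr hx.1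
    exact div_neg_of_neg_of_pos (gg_neg M _ hM hs0 (Real.sqrt_lt_sqrt hx.1.le hx.2)) (pow_pos hs0 3)
  have hx32 : ∀ x ∈ Set.Ioo (0:ℝ) M,
      x ^ ((3:ℝ)/2) * deriv (deriv (UkM M)) x = gg M (Real.sqrt x) := by
    intro x hx
    rw [hderiv2 x hx, FF2, rpow32 x hx.1.le]
    have h3 : Real.sqrt x ^ 3 ≠ 0 := pow_ne_zero _ (Real.sqrt_pos.mpr hx.1).ne'
    field_simp
    rw [mul_div_cancel_left₀ _ (Real.sqrt_pos.mpr hx.1).ne']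
  refine ⟨?_, ?_, ?_, ?_⟩
  · refine (strictConcaveOn_of_deriv2_neg (convex_Ioo 0 M) ?_ ?_).concaveOn
    · intro x hx
      exact (hd1 x hx).continuousAt.continuousWithinAt
    · intro x hx
      rw [interior_Ioo] at hx
      have hit : deriv^[2] (UkM M) x = deriv (deriv (UkM M)) x := rfl
      rw [hit, hderiv2 x hx]
      exact hFF2neg x hx
  · intro x hx
    rw [hderiv2 x hx]; exact hFF2neg x hx
  · have hc : ContinuousAt (gg M) 0 :=
      (hasDerivAt_gg M 0 hM le_rfl (Real.sqrt_pos.mpr hM)).continuousAt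
    have hsq : Tendsto Real.sqrt (nhds 0) (nhds 0) := by
      have h := (Real.continuous_sqrt.continuousAt (x := (0:ℝ)))
      rw [ContinuousAt, Real.sqrt_zero] at h
      exact h
    have hT : Tendsto (fun x : ℝ => gg M (Real.sqrt x)) (nhds 0) (nhds 0) := by
      simpa [gg_zero, Function.comp_def] using hc.tendsto.comp hsq
    refine (hT.mono_left nhdsWithin_le_nhds).congr' ?_
    filter_upwards [Ioo_mem_nhdsGT_of_mem (Set.left_mem_Ico.mpr hM)] with y hy
    exact (hx32 y hy).symm
  · intro x hx
    refine (hasDerivAt_ggsqrt M x hM hx.1 hx.2).congr_of_eventuallyEq ?_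
    filter_upwards [Ioo_mem_nhds hx.1 hx.2] with y hy
    exact hx32 y hy
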